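/- The Fontaine ring E(R^+) is a (possibly non-Noetherian) local ring, i.e. its nonunits form an ideal; ⟨p⟩ is a nonzerodivisor on E(R^+); the projection Φ : E(R^+) → R^+/pR^+ is surjective and its kernel is the principal ideal ⟨p⟩E(R^+), so that there is a short exact sequence 0 → E(R^+) →⟨p⟩ E(R^+) →Φ R^+/pR^+ → 0; and E(R^+) is complete and separated in the ⟨p⟩-adic topology (the natural map E(R^+) → lim_n E(R^+)/⟨p⟩^nE(R^+) is an isomorphism). -/

import Mathlib

set_option maxHeartbeats 1000000
set_option synthInstance.maxHeartbeats 400000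

open IsLocalRing

theorem FRaux.mem_smul_top_self {R : Type} [CommRing R] (J : Ideal R) (x : R) :
    x ∈ (J • ⊤ : Submodule R R) ↔ x ∈ J := by rw [smul_eq_mul, Ideal.mul_top]

/-! ### Auxiliary lemmas on precompleteness -/

section Pre

variable {R : Type} [CommRing R]

theorem FRaux.isPrecomplete_of_surjective {M M' : Type} [AddCommGroup M] [Module R M]
    [AddCommGroup M'] [Module R M'] (I : Ideal R) (q : M →ₗ[R] M')
    (hq : Function.Surjective q) (h : IsPrecomplete I M) : IsPrecomplete I M' := by
  constructor
  intro f hf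
  have key : ∀ n : ℕ, ∃ u : M, u ∈ (I ^ n • ⊤ : Submodule R M) ∧ q u = f (n + 1) - f n := by
    intro n
    have h1 : f (n + 1) - f n ∈ (I ^ n • ⊤ : Submodule R M') := by
      have := hf (le_of_lt (Nat.lt_succ_self n))
      rw [SModEq.sub_mem] at this
      simpa using (I ^ n • ⊤ : Submodule R M').neg_mem this
    have h2 : (I ^ n • ⊤ : Submodule R M') = Submodule.map q (I ^ n • ⊤ : Submodule R M) := by
      rw [Submodule.map_smul'', Submodule.map_top, LinearMap.range_eq_top.mpr hq]
    rw [h2] at h1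
    obtain ⟨u, hu, hqu⟩ := h1
    exact ⟨u, hu, hqu⟩
  choose u hu hqu using key
  obtain ⟨g0, hg0⟩ := hq (f 0)
  set g : ℕ → M := fun n => Nat.rec g0 (fun k b => b + u k) n with hg
  have hgs : ∀ n, g (n + 1) = g n + u n := fun n => rfl
  have hqg : ∀ n, q (g n) = f n := by
    intro n
    induction n with
    | zero => exact hg0
    | succ k ih => rw [hgs, map_add, ih, hqu]; abel
  have hcau : ∀ m n, m ≤ n → g m ≡ g n [SMOD (I ^ m • ⊤ : Submodule R M)] := by
    intro m n hmn
    rw [SModEq.sub_mem]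
    obtain ⟨j, rfl⟩ := Nat.exists_eq_add_of_le hmn
    clear hmn
    induction j with
    | zero => simpa using Submodule.zero_mem _
    | succ k ih =>
      have heq : g m - g (m + (k+1)) = (g m - g (m + k)) - u (m + k) := by
        rw [← Nat.add_assoc, hgs]; abel
      rw [heq]
      refine Submodule.sub_mem _ ih ?_
      exact Submodule.smul_mono_left (Ideal.pow_le_pow_right (Nat.le_add_right m k)) (hu (m + k))
  obtain ⟨L, hL⟩ := h.prec fun {m n} hmn => hcau m n hmn
  refine ⟨q L, fun n => ?_⟩
  rw [SModEq.sub_mem]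
  have h1 := hL n
  rw [SModEq.sub_mem] at h1
  have h2 : f n - q L = q (g n - L) := by rw [map_sub, hqg]
  have h3 : (I ^ n • ⊤ : Submodule R M') = Submodule.map q (I ^ n • ⊤ : Submodule R M) := by
    rw [Submodule.map_smul'', Submodule.map_top, LinearMap.range_eq_top.mpr hq]
  rw [h2, h3]
  exact ⟨g n - L, h1, rfl⟩

theorem FRaux.mem_smul_top_pi {k : ℕ} (J : Ideal R) (x : Fin k → R) :
    x ∈ (J • ⊤ : Submodule R (Fin k → R)) ↔ ∀ i, x i ∈ J := by
  constructor
  · intro hx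
    refine Submodule.smul_induction_on hx ?_ ?_
    · intro r hr m _ i
      exact J.mul_mem_right _ hr
    · intro a b ha hb i
      exact J.add_mem (ha i) (hb i)
  · intro hx
    have hx2 : x = ∑ i : Fin k, Pi.single i (x i) := (Finset.univ_sum_single x).symm
    rw [hx2]
    refine Submodule.sum_mem _ fun i _ => ?_
    have h1 : (Pi.single i (x i) : Fin k → R) = (x i) • (Pi.single i 1 : Fin k → R) := by
      ext j
      by_cases h : j = i
      · subst h; simp
      · simp [Pi.single_apply, h]
    rw [h1]
    exact Submodule.smul_mem_smul (hx i) trivial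

theorem FRaux.isPrecomplete_pi (I : Ideal R) (h : IsPrecomplete I R) (k : ℕ) :
    IsPrecomplete I (Fin k → R) := by
  constructor
  intro f hf
  have hco : ∀ i : Fin k, ∃ L : R, ∀ n, (f n) i ≡ L [SMOD (I ^ n • ⊤ : Submodule R R)] := by
    intro i
    refine h.prec (f := fun n => f n i) ?_
    intro m n hmn
    have h1 := hf hmn
    rw [SModEq.sub_mem] at h1 ⊢
    rw [FRaux.mem_smul_top_self]
    exact (FRaux.mem_smul_top_pi _ _).mp h1 i
  choose L hL using hco
  refine ⟨L, fun n => ?_⟩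
  rw [SModEq.sub_mem, FRaux.mem_smul_top_pi]
  intro i
  have h1 := hL i n
  rw [SModEq.sub_mem, FRaux.mem_smul_top_self] at h1
  exact h1

theorem FRaux.isPrecomplete_of_finite {M : Type} [AddCommGroup M] [Module R M]
    [Module.Finite R M] (I : Ideal R) (h : IsPrecomplete I R) : IsPrecomplete I M := by
  obtain ⟨k, q, hq⟩ := Module.Finite.exists_fin' R M
  exact FRaux.isPrecomplete_of_surjective I q hq (FRaux.isPrecomplete_pi I h k)

end Pre

/-! ### A module-finite algebra domain over a precomplete Noetherian local ring is local -/

theorem FRaux.locfin (R T : Type) [CommRing R] [IsNoetherianRing R] [IsLocalRing R]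
    [CommRing T] [IsDomain T] [Algebra R T] [Module.Finite R T]
    (hpre : IsPrecomplete (maximalIdeal R) T) : IsLocalRing T := by
  haveI : Algebra.IsIntegral R T := Algebra.IsIntegral.of_finite R T
  haveI : IsNoetherianRing T := by
    haveI : Algebra.FiniteType R T := inferInstance
    exact Algebra.FiniteType.isNoetherianRing R T
  obtain ⟨M₀, hM₀⟩ := Ideal.exists_maximal T
  refine IsLocalRing.of_unique_max_ideal ⟨M₀, hM₀, fun M₁ hM₁ => ?_⟩
  by_contra hne
  -- the ideal N = m T
  set N : Ideal T := Ideal.map (algebraMap R T) (maximalIdeal R) with hN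
  have hNle : ∀ M : Ideal T, M.IsMaximal → N ≤ M := by
    intro M hM
    haveI := hM
    rw [Ideal.map_le_iff_le_comap]
    have h1 : (Ideal.comap (algebraMap R T) M).IsMaximal :=
      Ideal.isMaximal_comap_of_isIntegral_of_isMaximal M
    rw [IsLocalRing.eq_maximalIdeal h1]
  have hNtop : N ≠ ⊤ := fun h => hM₀.ne_top (top_le_iff.mp (h ▸ hNle M₀ hM₀))
  -- the quotient T ⧸ N is Artinian
  set π : T →+* T ⧸ N := Ideal.Quotient.mk N with hπ
  have hπs : Function.Surjective π := Ideal.Quotient.mk_surjective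
  letI : Algebra (R ⧸ maximalIdeal R) (T ⧸ N) :=
    (Ideal.quotientMap N (algebraMap R T) Ideal.le_comap_map).toAlgebra
  haveI : IsArtinianRing (R ⧸ maximalIdeal R) := by
    have hdi : ∀ I : Ideal (R ⧸ maximalIdeal R), I = ⊥ ∨ I = ⊤ := by
      intro I
      have hsur : Function.Surjective (Ideal.Quotient.mk (maximalIdeal R)) :=
        Ideal.Quotient.mk_surjective
      have hle2 : maximalIdeal R ≤ Ideal.comap (Ideal.Quotient.mk (maximalIdeal R)) I := by
        intro x hx
        rw [Ideal.mem_comap, Ideal.Quotient.eq_zero_iff_mem.mpr hx]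
        exact I.zero_mem
      have hmap : Ideal.map (Ideal.Quotient.mk (maximalIdeal R))
          (Ideal.comap (Ideal.Quotient.mk (maximalIdeal R)) I) = I :=
        Ideal.map_comap_of_surjective _ hsur I
      rcases (lt_or_eq_of_le hle2) with h | h
      · right
        have h2 := ((IsLocalRing.maximalIdeal.isMaximal R).out).2 _ h
        rw [← hmap, h2, Ideal.map_top]
      · left
        rw [← hmap, ← h, Ideal.map_quotient_self]
    have hinj : Function.Injective (fun I : Ideal (R ⧸ maximalIdeal R) => I = ⊤) := by
      intro I J h
      rcases hdi I with hI | hI <;> rcases hdi J with hJ | hJ <;> simp_all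
    haveI : Finite (Ideal (R ⧸ maximalIdeal R)) := Finite.of_injective _ hinj
    exact Finite.to_wellFoundedLT
  haveI : IsScalarTower R (R ⧸ maximalIdeal R) (T ⧸ N) := by
    refine IsScalarTower.of_algebraMap_eq' ?_
    ext r
    show algebraMap R (T ⧸ N) r =
      Ideal.quotientMap N (algebraMap R T) Ideal.le_comap_map
        (Ideal.Quotient.mk (maximalIdeal R) r)
    rw [Ideal.quotientMap_mk, IsScalarTower.algebraMap_apply R T (T ⧸ N),
      Ideal.Quotient.algebraMap_eq]
  haveI : Module.Finite R (T ⧸ N) :=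
    Module.Finite.of_surjective (Ideal.Quotient.mkₐ R N).toLinearMap hπs
  haveI : Module.Finite (R ⧸ maximalIdeal R) (T ⧸ N) :=
    Module.Finite.of_restrictScalars_finite R _ _
  haveI : IsArtinian (R ⧸ maximalIdeal R) (T ⧸ N) := isArtinian_of_fg_of_artinian'
  haveI hart : IsArtinianRing (T ⧸ N) := isArtinian_of_tower (R ⧸ maximalIdeal R)
    (inferInstance : IsArtinian (R ⧸ maximalIdeal R) (T ⧸ N))
  -- two distinct maximal ideals downstairs
  have hcm : ∀ M : Ideal T, M.IsMaximal → Ideal.comap π (Ideal.map π M) = M := by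
    intro M hM
    rw [Ideal.comap_map_of_surjective π hπs]
    have hle : Ideal.comap π ⊥ ≤ M := by
      intro x hx
      apply hNle M hM
      rw [Ideal.mem_comap, Ideal.mem_bot] at hx
      exact Ideal.Quotient.eq_zero_iff_mem.mp hx
    exact sup_eq_left.mpr hle
  have hmax : ∀ M : Ideal T, M.IsMaximal → (Ideal.map π M).IsMaximal := by
    intro M hM
    rcases Ideal.map_eq_top_or_isMaximal_of_surjective π hπs hM with h | h
    · exfalso
      have := hcm M hM
      rw [h, Ideal.comap_top] at this
      exact hM.ne_top this.symm
    · exact h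
  set B1 : Ideal (T ⧸ N) := Ideal.map π M₁ with hB1
  set B2 : Ideal (T ⧸ N) := Ideal.map π M₀ with hB2
  have hB12 : B1 ≠ B2 := by
    intro h
    apply hne
    have := congrArg (Ideal.comap π) h
    rwa [hcm M₁ hM₁, hcm M₀ hM₀] at this
  -- powers of B2 stabilize
  obtain ⟨s, hs⟩ := IsArtinian.monotone_stabilizes (R := T ⧸ N) (M := T ⧸ N)
    ⟨fun n => OrderDual.toDual (B2 ^ n), fun m n hmn => Ideal.pow_le_pow_right hmn⟩
  have hstab : ∀ m, s ≤ m → B2 ^ s = B2 ^ m := fun m hm => hs m hm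
  have hII : B2 ^ (s+1) ≤ (B2 ^ (s+1)) • (B2 ^ (s+1)) := by
    rw [smul_eq_mul, ← pow_add, ← hstab (s+1+(s+1)) (by omega), hstab (s+1) (by omega)]
  have hIbot : B2 ^ (s+1) ≠ ⊥ := by
    intro h
    haveI := hmax M₁ hM₁
    have h1 : B2 ^ (s + 1) ≤ B1 := by rw [h]; exact bot_le
    have h2 : B2 ≤ B1 := ((hmax M₁ hM₁).isPrime.pow_le_iff (Nat.succ_ne_zero s)).mp h1
    exact hB12 (((hmax M₀ hM₀).eq_of_le (hmax M₁ hM₁).ne_top h2).symm)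
  -- Nakayama: there is an idempotent ε ≠ 0, 1 in the quotient
  obtain ⟨r, hr1, hr0⟩ := Submodule.exists_sub_one_mem_and_smul_eq_zero_of_fg_of_le_smul
    (B2 ^ (s+1)) (B2 ^ (s+1)) (IsNoetherian.noetherian _) hII
  set ε : T ⧸ N := 1 - r with hε
  have hεI : ε ∈ B2 ^ (s+1) := by
    have := (B2 ^ (s+1)).neg_mem hr1
    simpa [hε] using this
  have hfix : ∀ x ∈ B2 ^ (s+1), ε * x = x := by
    intro x hx
    have h1 : r * x = 0 := by simpa [smul_eq_mul] using hr0 x hx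
    have h2 : (1 - r) * x = x - r * x := by ring
    rw [hε, h2, h1, sub_zero]
  have hidem : ε * ε = ε := hfix ε hεI
  have hε0 : ε ≠ 0 := by
    intro h
    apply hIbot
    rw [eq_bot_iff]
    intro x hx
    have := hfix x hx
    rw [h, zero_mul] at this
    simpa using this.symm
  have hε1 : ε ≠ 1 := by
    intro h
    have h1 : (1 : T ⧸ N) ∈ B2 := by
      apply Ideal.pow_le_self (Nat.succ_ne_zero s)
      rw [← h]; exact hεI
    exact (hmax M₀ hM₀).ne_top ((Ideal.eq_top_iff_one B2).mpr h1)
  -- lift ε to an idempotent in T by Newton iteration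
  obtain ⟨e₀, he₀⟩ := hπs ε
  have hd₀ : e₀ ^ 2 - e₀ ∈ N := by
    rw [← Ideal.mk_ker (I := N), RingHom.mem_ker]
    have : π (e₀ ^ 2 - e₀) = ε * ε - ε := by rw [map_sub, map_pow, he₀]; ring
    rw [this, hidem, sub_self]
  set c : ℕ → T := fun n => Nat.rec e₀ (fun _ b => 3 * b ^ 2 - 2 * b ^ 3) n with hc
  have hcs : ∀ n, c (n + 1) = 3 * (c n) ^ 2 - 2 * (c n) ^ 3 := fun n => rfl
  have hd : ∀ n, (c n) ^ 2 - c n ∈ N ^ (n + 1) := by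
    intro n
    induction n with
    | zero => rw [zero_add, pow_one]; exact hd₀
    | succ k ih =>
      have hid : (c (k+1)) ^ 2 - c (k+1)
          = ((c k) ^ 2 - c k) ^ 2 * ((1 - 2 * c k) ^ 2 - 4) := by
        rw [hcs]; ring
      rw [hid]
      have h1 : ((c k) ^ 2 - c k) ^ 2 ∈ (N ^ (k + 1)) ^ 2 := Ideal.pow_mem_pow ih 2
      have h2 : (N ^ (k + 1)) ^ 2 = N ^ (2 * (k + 1)) := by rw [← pow_mul]; ring_nf
      have h3 : N ^ (2 * (k + 1)) ≤ N ^ (k + 2) := Ideal.pow_le_pow_right (by omega)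
      exact Ideal.mul_mem_right _ _ (h3 (h2 ▸ h1))
  have hstep : ∀ n, c (n + 1) - c n ∈ N ^ (n + 1) := by
    intro n
    have hid : c (n+1) - c n = -((2 * c n - 1) * ((c n) ^ 2 - c n)) := by rw [hcs]; ring
    rw [hid]
    exact (N ^ (n+1)).neg_mem (Ideal.mul_mem_left _ _ (hd n))
  have hcau : ∀ m j, c (m + j) - c m ∈ N ^ (m + 1) := by
    intro m j
    induction j with
    | zero => simpa using (N ^ (m+1)).zero_mem
    | succ k ih =>
      have heq : c (m + (k+1)) - c m = (c (m + k + 1) - c (m + k)) + (c (m + k) - c m) := by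
        rw [← Nat.add_assoc]; abel
      rw [heq]
      exact (N ^ (m+1)).add_mem (Ideal.pow_le_pow_right (by omega) (hstep (m+k))) ih
  -- precompleteness of T for the N-adic topology
  have hpreN : ∀ f : ℕ → T, (∀ m n, m ≤ n → f m - f n ∈ N ^ m) →
      ∃ L : T, ∀ n, f n - L ∈ N ^ n := by
    intro f hf
    have h1 : ∀ (n : ℕ) (x : T), x ∈ ((maximalIdeal R) ^ n • ⊤ : Submodule R T) ↔ x ∈ N ^ n := by
      intro n x
      rw [Ideal.smul_top_eq_map, Submodule.restrictScalars_mem, Ideal.map_pow]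
    obtain ⟨L, hL⟩ := hpre.prec (f := f) (by
      intro m n hmn
      rw [SModEq.sub_mem, h1]
      exact hf m n hmn)
    refine ⟨L, fun n => ?_⟩
    have := hL n
    rw [SModEq.sub_mem, h1] at this
    exact this
  obtain ⟨L, hL⟩ := hpreN c (by
    intro m n hmn
    obtain ⟨j, rfl⟩ := Nat.exists_eq_add_of_le hmn
    have := (N ^ (m+1)).neg_mem (hcau m j)
    simpa using Ideal.pow_le_pow_right (Nat.le_succ m) this)
  -- L is idempotent
  have hLL : L ^ 2 - L = 0 := by
    have hmem : ∀ n, L ^ 2 - L ∈ N ^ n := by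
      intro n
      have h1 : L ^ 2 - L = (L - c n) * (L + c n - 1) + ((c n) ^ 2 - c n) := by ring
      rw [h1]
      refine (N ^ n).add_mem ?_ (Ideal.pow_le_pow_right (Nat.le_succ n) (hd n))
      have h2 : L - c n ∈ N ^ n := by
        have := (N ^ n).neg_mem (hL n); simpa using this
      exact Ideal.mul_mem_right _ _ h2
    have h3 : L ^ 2 - L ∈ (⊥ : Ideal T) := by
      rw [← Ideal.iInf_pow_eq_bot_of_isDomain N hNtop]
      exact (Submodule.mem_iInf _).mpr hmem
    simpa using h3
  have hLidem : IsIdempotentElem L := by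
    rw [IsIdempotentElem, ← sq]
    rw [sub_eq_zero] at hLL
    exact hLL
  -- π L = ε, contradiction
  have hπL : π L = ε := by
    have h1 : L - e₀ ∈ N := by
      have h2 : c 1 - L ∈ N := by simpa using Ideal.pow_le_pow_right (le_refl 1) (hL 1)
      have h3 : c 1 - c 0 ∈ N := by simpa using Ideal.pow_le_pow_right (le_refl 1) (hstep 0)
      have h4 : L - e₀ = (c 1 - c 0) - (c 1 - L) := by
        have h5 : c 0 = e₀ := rfl
        rw [h5]; abel
      rw [h4]; exact N.sub_mem h3 h2
    have h5 : π L = π e₀ := Ideal.Quotient.eq.mpr h1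
    rw [h5, he₀]
  rcases (IsIdempotentElem.iff_eq_zero_or_one).mp hLidem with h | h
  · rw [h, map_zero] at hπL; exact hε0 hπL.symm
  · rw [h, map_one] at hπL; exact hε1 hπL.symm

/-! ### The absolute integral closure -/

/-- The absolute integral closure `R⁺` of a domain `R`. -/
noncomputable def AbsIntClosure (R : Type) [CommRing R] [IsDomain R] : Type :=
  integralClosure R (AlgebraicClosure (FractionRing R))

noncomputable instance (R : Type) [CommRing R] [IsDomain R] : CommRing (AbsIntClosure R) :=
  inferInstanceAs (CommRing (integralClosure R (AlgebraicClosure (FractionRing R))))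

noncomputable instance (R : Type) [CommRing R] [IsDomain R] : Algebra R (AbsIntClosure R) :=
  inferInstanceAs (Algebra R (integralClosure R (AlgebraicClosure (FractionRing R))))

section AIC

variable (R : Type) [CommRing R] [IsDomain R]

noncomputable instance : IsDomain (AbsIntClosure R) :=
  inferInstanceAs (IsDomain (integralClosure R (AlgebraicClosure (FractionRing R))))

/-- The embedding of the absolute integral closure into the algebraic closure. -/
noncomputable def FRaux.aicVal : AbsIntClosure R →ₐ[R] AlgebraicClosure (FractionRing R) :=
  (integralClosure R (AlgebraicClosure (FractionRing R))).val

theorem FRaux.aicVal_inj : Function.Injective (FRaux.aicVal R) := Subtype.val_injective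

theorem FRaux.aicVal_int (a : AbsIntClosure R) : IsIntegral R (FRaux.aicVal R a) := a.2

theorem FRaux.aic_exists_of_int (z : AlgebraicClosure (FractionRing R)) (hz : IsIntegral R z) :
    ∃ b : AbsIntClosure R, FRaux.aicVal R b = z := ⟨⟨z, hz⟩, rfl⟩

instance : Algebra.IsIntegral R (AbsIntClosure R) :=
  ⟨fun a => (isIntegral_algHom_iff (FRaux.aicVal R) (FRaux.aicVal_inj R)).mp
    (FRaux.aicVal_int R a)⟩

/-- Every element of the absolute integral closure has `n`-th roots. -/
theorem FRaux.aic_exists_pow_eq (a : AbsIntClosure R) {n : ℕ} (hn : 0 < n) :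
    ∃ b : AbsIntClosure R, b ^ n = a := by
  obtain ⟨z, hz⟩ := IsAlgClosed.exists_pow_nat_eq (FRaux.aicVal R a) hn
  have hzint : IsIntegral R z := by
    refine IsIntegral.of_pow hn ?_
    rw [hz]
    exact FRaux.aicVal_int R a
  obtain ⟨b, hb⟩ := FRaux.aic_exists_of_int R z hzint
  refine ⟨b, FRaux.aicVal_inj R ?_⟩
  rw [map_pow, hb, hz]

theorem FRaux.aic_natCast_ne_zero [CharZero R] {n : ℕ} (hn : n ≠ 0) :
    (n : AbsIntClosure R) ≠ 0 := by
  intro h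
  have h2 : FRaux.aicVal R (n : AbsIntClosure R) = 0 := by rw [h, map_zero]
  rw [map_natCast] at h2
  exact hn (Nat.cast_injective.eq_iff.mp (by rw [h2, Nat.cast_zero]))

/-- `n` is not a unit in the absolute integral closure when `n ∈ m`. -/
theorem FRaux.aic_not_unit [IsLocalRing R] {n : ℕ} (hn : (n : R) ∈ maximalIdeal R) :
    ¬ IsUnit (n : AbsIntClosure R) := by
  intro hu
  obtain ⟨J, hJmax, hJcomap⟩ := Ideal.exists_ideal_over_maximal_of_isIntegral
    (S := AbsIntClosure R) (maximalIdeal R) (by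
      intro x hx
      rw [RingHom.mem_ker] at hx
      have h1 : FRaux.aicVal R (algebraMap R (AbsIntClosure R) x) = 0 := by
        rw [hx, map_zero]
      rw [AlgHom.commutes] at h1
      have hinj : Function.Injective (algebraMap R (AlgebraicClosure (FractionRing R))) := by
        have h2 : Function.Injective (algebraMap R (FractionRing R)) :=
          IsFractionRing.injective R (FractionRing R)
        have h3 : Function.Injective (algebraMap (FractionRing R)
            (AlgebraicClosure (FractionRing R))) := RingHom.injective _
        rw [IsScalarTower.algebraMap_eq R (FractionRing R) (AlgebraicClosure (FractionRing R))]
        exact h3.comp h2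
      have h4 := hinj (by rw [h1, map_zero] : algebraMap R _ x = algebraMap R _ 0)
      simp [h4])
  have hmem : (n : AbsIntClosure R) ∈ J := by
    have h5 : (n : R) ∈ Ideal.comap (algebraMap R (AbsIntClosure R)) J := hJcomap ▸ hn
    rw [Ideal.mem_comap, map_natCast] at h5
    exact h5
  exact hJmax.ne_top (J.eq_top_of_isUnit_mem hmem hu)

/-- The absolute integral closure of a precomplete Noetherian local domain is local. -/
theorem FRaux.aic_isLocalRing [IsNoetherianRing R] [IsLocalRing R]
    (hpre : IsPrecomplete (maximalIdeal R) R) : IsLocalRing (AbsIntClosure R) := by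
  apply IsLocalRing.of_isUnit_or_isUnit_one_sub_self
  intro a
  set T : Subalgebra R (AbsIntClosure R) := Algebra.adjoin R {a} with hT
  haveI : Module.Finite R ↥T :=
    ⟨(Submodule.fg_top _).mpr (Algebra.IsIntegral.isIntegral (R := R) a).fg_adjoin_singleton⟩
  have hpreT : IsPrecomplete (maximalIdeal R) ↥T := FRaux.isPrecomplete_of_finite _ hpre
  haveI : IsLocalRing ↥T := FRaux.locfin R ↥T hpreT
  set b : ↥T := ⟨a, Algebra.self_mem_adjoin_singleton R a⟩ with hb
  have hba : T.val b = a := rfl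
  rcases IsLocalRing.isUnit_or_isUnit_one_sub_self b with h | h
  · left
    have h2 := h.map T.val
    rwa [hba] at h2
  · right
    have h2 := h.map T.val
    rwa [map_sub, map_one, hba] at h2

end AIC

/-- Abstract main lemma: properties of the inverse limit of `A` along Frobenius. -/
theorem FRaux.main
    (p : ℕ) (hp : p.Prime)
    (Rp : Type) [CommRing Rp] [IsDomain Rp]
    (A : Type) [CommRing A] [CharP A p] (hAloc : IsLocalRing A)
    (π : Rp →+* A) (hπsurj : Function.Surjective π)
    (pseq : ℕ → Rp) (hpseq0 : pseq 0 = (p : Rp)) (hpseqpow : ∀ n, pseq (n + 1) ^ p = pseq n)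
    (hpne0 : (p : Rp) ≠ 0)
    (hπker : ∀ a : Rp, π a = 0 ↔ (p : Rp) ∣ a)
    (hAIC : ∀ (k : ℕ) (u v : Rp), u ^ (p ^ k) = (p : Rp) * v → ∃ w : Rp, u = pseq k * w)
    (hroot : ∀ u : Rp, ∃ b : Rp, b ^ p = u)
    (E : Type) [CommRing E]
    (φ : (n : ℕ) → E →+* A)
    (hφ : ∀ (e : E) (n : ℕ), φ (n + 1) e ^ p = φ n e)
    (hφlim : ∀ f : ℕ → A, (∀ n, f (n + 1) ^ p = f n) → ∃! e : E, ∀ n, φ n e = f n)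
    (pE : E) (hpE : ∀ n, φ n pE = π (pseq n)) :
    IsLocalRing E ∧
    (∀ e : E, pE * e = 0 → e = 0) ∧
    Function.Surjective (φ 0) ∧
    RingHom.ker (φ 0) = Ideal.span {pE} ∧
    IsAdicComplete (Ideal.span {pE}) E := by
  classical
  have hp1 : 1 < p := hp.one_lt
  have hppos : 0 < p := hp.pos
  haveI : Fact p.Prime := ⟨hp⟩
  haveI := hAloc
  have hπp0 : π (p : Rp) = 0 := (hπker _).mpr ⟨1, (mul_one _).symm⟩
  -- facts about pseq
  have hpseqpow' : ∀ k j, pseq (k + j) ^ (p ^ j) = pseq k := by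
    intro k j
    induction j with
    | zero => simp
    | succ i ih =>
      have h1 : pseq (k + (i + 1)) ^ (p ^ (i + 1)) = (pseq (k + i + 1) ^ p) ^ (p ^ i) := by
        rw [← pow_mul]
        congr 1
        rw [pow_succ]
        ring
      rw [h1, hpseqpow (k + i), ih]
  have hpseqtop : ∀ k, pseq k ^ (p ^ k) = (p : Rp) := by
    intro k
    have := hpseqpow' 0 k
    rwa [Nat.zero_add, hpseq0] at this
  have hpseqne : ∀ k, pseq k ≠ 0 := by
    intro k h
    apply hpne0
    rw [← hpseqtop k, h, zero_pow (by positivity)]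
  have hϖ0 : ∀ k, (π (pseq k)) ^ (p ^ k) = 0 := by
    intro k
    rw [← map_pow, hpseqtop, hπp0]
  -- facts about φ
  have hφpow : ∀ (e : E) k j, φ (k + j) e ^ (p ^ j) = φ k e := by
    intro e k j
    induction j with
    | zero => simp
    | succ i ih =>
      have h1 : φ (k + (i + 1)) e ^ (p ^ (i + 1)) = (φ (k + i + 1) e ^ p) ^ (p ^ i) := by
        rw [← pow_mul]
        congr 1
        rw [pow_succ]
        ring
      rw [h1, hφ e (k + i), ih]
  have huniq : ∀ e₁ e₂ : E, (∀ n, φ n e₁ = φ n e₂) → e₁ = e₂ := by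
    intro e₁ e₂ h
    obtain ⟨e, -, hu⟩ := hφlim (fun n => φ n e₂) (fun n => hφ e₂ n)
    rw [hu e₁ h, hu e₂ (fun n => rfl)]
  -- division lemma
  have hdiv : ∀ k j j', j + j' ≤ p ^ k → ∀ a : A,
      π (pseq k) ^ j * a = 0 → ∃ b, a = π (pseq k) ^ j' * b := by
    intro k j j' hjj a ha
    obtain ⟨u, rfl⟩ := hπsurj a
    have h1 : π (pseq k ^ j * u) = 0 := by
      rw [map_mul, map_pow]
      exact ha
    rw [hπker] at h1
    obtain ⟨v, hv⟩ := h1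
    set t : ℕ := p ^ k - j - j' with ht
    have hexp : j + (j' + t) = p ^ k := by omega
    have h2 : pseq k ^ j * u = pseq k ^ j * (pseq k ^ j' * (pseq k ^ t * v)) := by
      rw [hv, ← hpseqtop k, ← hexp, pow_add, pow_add]
      ring
    have h3 := mul_left_cancel₀ (pow_ne_zero j (hpseqne k)) h2
    exact ⟨π (pseq k ^ t * v), by rw [h3, map_mul, map_pow]⟩
  -- nilpotents are divisible by π (pseq k)
  have hnil : ∀ k (a : A), a ^ (p ^ k) = 0 → ∃ b, a = π (pseq k) * b := by
    intro k a ha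
    obtain ⟨u, rfl⟩ := hπsurj a
    have h1 : π (u ^ p ^ k) = 0 := by rw [map_pow]; exact ha
    rw [hπker] at h1
    obtain ⟨v, hv⟩ := h1
    obtain ⟨w, hw⟩ := hAIC k u v hv
    exact ⟨π w, by rw [hw, map_mul]⟩
  -- key divisibility lemma
  have hKD : ∀ (m : ℕ) (e : E), (∀ k, m ≤ p ^ k → ∃ c, φ k e = π (pseq k) ^ m * c) →
      ∃ e' : E, e = pE ^ m * e' := by
    intro m e H
    have hmlt : ∀ k, m < p ^ (m + k) :=
      fun k => lt_of_lt_of_le (Nat.lt_pow_self (n := m) hp1)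
        (Nat.pow_le_pow_right hppos (Nat.le_add_right m k))
    choose F hF using fun k => H (m + k) (le_of_lt (hmlt k))
    have hF' : ∀ k, φ (m + k + 1) e = π (pseq (m + k + 1)) ^ m * F (k + 1) :=
      fun k => hF (k + 1)
    set G : ℕ → A := fun k => (F (k + 1)) ^ p with hGdef
    have hGval : ∀ k, G k = F (k + 1) ^ p := fun _ => rfl
    have hϖs : ∀ k, π (pseq (m + k)) = π (pseq (m + k + 1)) ^ p := by
      intro k
      rw [← map_pow, hpseqpow (m + k)]
    have hG1 : ∀ k, π (pseq (m + k)) ^ m * G k = φ (m + k) e := by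
      intro k
      have h1 : π (pseq (m + k)) ^ m * G k
          = (π (pseq (m + k + 1)) ^ m * F (k + 1)) ^ p := by
        rw [hGval, hϖs k, mul_pow, ← pow_mul, ← pow_mul, Nat.mul_comm p m]
      rw [h1, ← hF' k, hφ e (m + k)]
    have hG2 : ∀ k, G (k + 1) ^ p = G k := by
      intro k
      have h1 : π (pseq (m + k + 1)) ^ m * (F (k + 2) ^ p - F (k + 1)) = 0 := by
        rw [mul_sub]
        have h2 : π (pseq (m + k + 1)) ^ m * (F (k + 2) ^ p) = φ (m + k + 1) e := hG1 (k + 1)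
        rw [h2, ← hF' k, sub_self]
      obtain ⟨b, hb⟩ := hdiv (m + k + 1) m (p ^ (m + k)) (by
        have h3 : p ^ (m + k + 1) = p ^ (m + k) * p := pow_succ p (m + k)
        have h4 : m ≤ p ^ (m + k) := le_of_lt (hmlt k)
        have h5 : p ^ (m + k) * 2 ≤ p ^ (m + k) * p := Nat.mul_le_mul_left _ hp1
        omega) _ h1
      have h6 : G (k + 1) ^ p - G k = (F (k + 2) ^ p - F (k + 1)) ^ p := by
        rw [hGval, hGval, sub_pow_char]
      have h7 : (F (k + 2) ^ p - F (k + 1)) ^ p = 0 := by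
        rw [hb, mul_pow, ← pow_mul, ← pow_succ p (m + k), hϖ0, zero_mul]
      have h8 : G (k + 1) ^ p - G k = 0 := by rw [h6, h7]
      rw [sub_eq_zero] at h8
      exact h8
    -- extend G downwards
    set h : ℕ → A :=
      fun j => if hj : m ≤ j then G (j - m) else G 0 ^ (p ^ (m - j)) with hhdef
    have hcomp : ∀ j, h (j + 1) ^ p = h j := by
      intro j
      by_cases hj : m ≤ j
      · have hj1 : m ≤ j + 1 := le_trans hj (Nat.le_succ j)
        rw [hhdef]
        simp only [dif_pos hj, dif_pos hj1]
        have h9 : j + 1 - m = (j - m) + 1 := by omega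
        rw [h9]
        exact hG2 (j - m)
      · by_cases hj1 : m ≤ j + 1
        · rw [hhdef]
          simp only [dif_pos hj1, dif_neg hj]
          have h9 : j + 1 - m = 0 := by omega
          have h10 : m - j = 1 := by omega
          rw [h9, h10, pow_one]
        · rw [hhdef]
          simp only [dif_neg hj, dif_neg hj1]
          rw [← pow_mul]
          congr 1
          have h9 : m - j = (m - (j + 1)) + 1 := by omega
          rw [h9, pow_succ]
    have hmain : ∀ j, π (pseq j) ^ m * h j = φ j e := by
      intro j
      by_cases hj : m ≤ j
      · rw [hhdef]
        simp only [dif_pos hj]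
        have h9 := hG1 (j - m)
        have h10 : m + (j - m) = j := by omega
        rw [h10] at h9
        exact h9
      · rw [hhdef]
        simp only [dif_neg hj]
        have h6 : j + (m - j) = m := by omega
        have h7 : π (pseq j) = π (pseq m) ^ (p ^ (m - j)) := by
          rw [← map_pow]
          congr 1
          have h13 := hpseqpow' j (m - j)
          rw [h6] at h13
          exact h13.symm
        have h8 : π (pseq j) ^ m = (π (pseq m) ^ m) ^ (p ^ (m - j)) := by
          rw [h7, ← pow_mul, ← pow_mul, Nat.mul_comm]
        rw [h8, ← mul_pow]
        have h11 : π (pseq m) ^ m * G 0 = φ m e := hG1 0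
        rw [h11]
        have h12 := hφpow e j (m - j)
        rw [h6] at h12
        exact h12
    obtain ⟨e', he', -⟩ := hφlim h hcomp
    refine ⟨e', huniq _ _ (fun n => ?_)⟩
    rw [map_mul, map_pow, hpE, he', hmain]
  -- Part 1: E is local
  have hunit : ∀ e : E, IsUnit (φ 0 e) → IsUnit e := by
    intro e h
    have hAll : ∀ k, ∃ b, φ k e * b = 1 := by
      intro k
      have h2 : (φ k e) ^ (p ^ k) = φ 0 e := by
        have := hφpow e 0 k
        rwa [Nat.zero_add] at this
      have h1 : IsUnit (φ k e) := by
        have h3 : IsUnit ((φ k e) ^ (p ^ k)) := h2 ▸ h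
        exact (isUnit_pow_iff (by positivity)).mp h3
      obtain ⟨u, hu⟩ := h1
      exact ⟨(u⁻¹ : _), by rw [← hu]; exact u.mul_inv⟩
    choose binv hbinv using hAll
    have hbcomp : ∀ n, binv (n + 1) ^ p = binv n := by
      intro n
      have h1 : φ n e * (binv (n + 1) ^ p) = 1 := by
        rw [← hφ e n, ← mul_pow, hbinv (n + 1), one_pow]
      calc binv (n + 1) ^ p = binv (n + 1) ^ p * (φ n e * binv n) := by rw [hbinv n, mul_one]
        _ = binv n * (φ n e * binv (n + 1) ^ p) := by ring
        _ = binv n := by rw [h1, mul_one]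
    obtain ⟨einv, heinv, -⟩ := hφlim binv hbcomp
    have h4 : e * einv = 1 :=
      huniq (e * einv) 1 (fun n => by rw [map_mul, heinv, map_one, hbinv])
    exact IsUnit.of_mul_eq_one _ h4
  have hloc : IsLocalRing E := by
    haveI : Nontrivial E := ⟨⟨0, 1, fun h => by
      have h1 := congrArg (φ 0) h
      rw [map_zero, map_one] at h1
      exact zero_ne_one h1⟩⟩
    refine IsLocalRing.of_isUnit_or_isUnit_one_sub_self (fun e => ?_)
    rcases IsLocalRing.isUnit_or_isUnit_one_sub_self (φ 0 e) with h | h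
    · exact Or.inl (hunit e h)
    · refine Or.inr (hunit _ ?_)
      rwa [map_sub, map_one]
  -- Part 2: pE is a nonzerodivisor
  have hnzd : ∀ e : E, pE * e = 0 → e = 0 := by
    intro e he
    refine huniq e 0 (fun k => ?_)
    rw [map_zero]
    have h1 : π (pseq (k + 1)) * φ (k + 1) e = 0 := by
      have h2 := congrArg (φ (k + 1)) he
      rw [map_mul, map_zero, hpE] at h2
      exact h2
    obtain ⟨b, hb⟩ := hdiv (k + 1) 1 (p ^ k) (by
      have h3 : p ^ (k + 1) = p ^ k * p := pow_succ p k
      have h4 : 1 ≤ p ^ k := Nat.one_le_pow k p hppos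
      have h5 : p ^ k * 2 ≤ p ^ k * p := Nat.mul_le_mul_left _ hp1
      omega) _ (by rw [pow_one]; exact h1)
    have h6 : φ k e = (φ (k + 1) e) ^ p := by
      have h7 := hφpow e k 1
      rw [pow_one] at h7
      exact h7.symm
    rw [h6, hb, mul_pow, ← pow_mul, ← pow_succ p k, hϖ0, zero_mul]
  -- Part 3: surjectivity
  have hfrob : ∀ a : A, ∃ b, b ^ p = a := by
    intro a
    obtain ⟨u, rfl⟩ := hπsurj a
    obtain ⟨b, hb⟩ := hroot u
    exact ⟨π b, by rw [← map_pow, hb]⟩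
  have hsurj : Function.Surjective (φ 0) := by
    intro a
    choose rt hrt using hfrob
    obtain ⟨e, he, -⟩ := hφlim (fun n => rt^[n] a) (fun n => by
      show rt^[n + 1] a ^ p = rt^[n] a
      rw [Function.iterate_succ_apply']
      exact hrt _)
    refine ⟨e, ?_⟩
    rw [he 0, Function.iterate_zero_apply]
  -- Part 4: kernel of φ 0
  have hker : RingHom.ker (φ 0) = Ideal.span {pE} := by
    apply le_antisymm
    · intro e he
      rw [RingHom.mem_ker] at he
      have H : ∀ k, 1 ≤ p ^ k → ∃ c, φ k e = π (pseq k) ^ 1 * c := by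
        intro k _
        have h1 : (φ k e) ^ (p ^ k) = 0 := by
          have h2 := hφpow e 0 k
          rw [Nat.zero_add, he] at h2
          exact h2
        obtain ⟨c, hc⟩ := hnil k _ h1
        exact ⟨c, by rw [pow_one]; exact hc⟩
      obtain ⟨e', he'⟩ := hKD 1 e H
      rw [Ideal.mem_span_singleton]
      exact ⟨e', by rw [he', pow_one]⟩
    · rw [Ideal.span_le]
      intro y hy
      simp only [Set.mem_singleton_iff] at hy
      subst hy
      rw [SetLike.mem_coe, RingHom.mem_ker, hpE, hpseq0]
      exact hπp0
  -- Part 5: pE-adic completeness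
  have hmemiff : ∀ (n : ℕ) (e : E),
      e ∈ (Ideal.span {pE} ^ n • ⊤ : Submodule E E) ↔ ∃ y, e = pE ^ n * y := by
    intro n e
    rw [FRaux.mem_smul_top_self, Ideal.span_singleton_pow, Ideal.mem_span_singleton]
    exact ⟨fun ⟨y, hy⟩ => ⟨y, hy⟩, fun ⟨y, hy⟩ => ⟨y, hy⟩⟩
  have hcomplE : IsAdicComplete (Ideal.span {pE}) E := by
    refine { toIsHausdorff := ⟨?_⟩, toIsPrecomplete := ⟨?_⟩ }
    · intro e he
      refine huniq e 0 (fun k => ?_)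
      rw [map_zero]
      have h1 := he (p ^ k)
      rw [SModEq.zero, hmemiff] at h1
      obtain ⟨y, hy⟩ := h1
      rw [hy, map_mul, map_pow, hpE, hϖ0, zero_mul]
    · intro f hf
      have hstab : ∀ k N, p ^ k ≤ N → φ k (f N) = φ k (f (p ^ k)) := by
        intro k N hN
        have h1 := hf hN
        rw [SModEq.sub_mem, hmemiff] at h1
        obtain ⟨y, hy⟩ := h1
        have h2 : φ k (f (p ^ k)) - φ k (f N) = 0 := by
          rw [← map_sub, hy, map_mul, map_pow, hpE, hϖ0, zero_mul]
        rw [sub_eq_zero] at h2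
        exact h2.symm
      obtain ⟨L, hL, -⟩ := hφlim (fun k => φ k (f (p ^ k))) (fun k => by
        rw [hφ]
        exact hstab k (p ^ (k + 1)) (Nat.pow_le_pow_right hppos (Nat.le_succ k)))
      refine ⟨L, fun n => ?_⟩
      rw [SModEq.sub_mem, hmemiff]
      refine hKD n (f n - L) (fun k hk => ?_)
      have h1 : φ k L = φ k (f (max n (p ^ k))) := by
        rw [hL k]
        exact (hstab k (max n (p ^ k)) (le_max_right _ _)).symm
      have h2 := hf (le_max_left n (p ^ k))
      rw [SModEq.sub_mem, hmemiff] at h2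
      obtain ⟨y, hy⟩ := h2
      refine ⟨φ k y, ?_⟩
      rw [map_sub, h1, ← map_sub, hy, map_mul, map_pow, hpE]
  exact ⟨hloc, hnzd, hsurj, hker, hcomplE⟩


/-- **Proposition 4.3 (1).** Let `(R, m)` be a complete regular local ring of mixed
characteristic `p > 0` with perfect residue field, with regular system of parameters
`p, x₂, …, x_d`, and let `R⁺` be its absolute integral closure. The Fontaine ring `E(R⁺)`
(the perfection of `R⁺/pR⁺`, encoded here by a ring `E` with coordinate projections
`φ n : E →+* R⁺/pR⁺` identifying it with the inverse limit of `R⁺/pR⁺` along Frobenius) is a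
(quasi)local ring, `⟨p⟩` is a nonzerodivisor on `E(R⁺)`, the projection `Φ = φ 0` is
surjective with kernel the principal ideal `⟨p⟩E(R⁺)` (giving the short exact sequence
`0 → E(R⁺) → E(R⁺) → R⁺/pR⁺ → 0`), and `E(R⁺)` is `⟨p⟩`-adically complete and separated. -/
theorem fontaine_ring_properties
    (p : ℕ) (hp : p.Prime) (d : ℕ) (hd : 0 < d)
    (R : Type) [CommRing R] [IsDomain R] [IsNoetherianRing R] [IsLocalRing R]
    [CharZero R] (hcompl : IsAdicComplete (maximalIdeal R) R)
    (hdim : ringKrullDim R = d)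
    (x : Fin d → R) (hx0 : x ⟨0, hd⟩ = (p : R))
    (hxgen : maximalIdeal R = Ideal.span (Set.range x))
    (hperf : Function.Bijective fun t : ResidueField R => t ^ p)
    -- the Fontaine ring `E(R⁺)` with its coordinate projections
    (E : Type) [CommRing E]
    (φ : (n : ℕ) → E →+* (AbsIntClosure R ⧸ Ideal.span {(p : AbsIntClosure R)}))
    (hφ : ∀ (e : E) (n : ℕ), φ (n + 1) e ^ p = φ n e)
    (hφlim : ∀ f : ℕ → (AbsIntClosure R ⧸ Ideal.span {(p : AbsIntClosure R)}),
      (∀ n, f (n + 1) ^ p = f n) → ∃! e : E, ∀ n, φ n e = f n)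
    -- the element `⟨p⟩` given by a compatible system of `p`-power roots of `p` in `R⁺`
    (pseq : ℕ → AbsIntClosure R) (hpseq0 : pseq 0 = (p : AbsIntClosure R))
    (hpseqpow : ∀ n, pseq (n + 1) ^ p = pseq n)
    (pE : E)
    (hpE : ∀ n, φ n pE = Ideal.Quotient.mk (Ideal.span {(p : AbsIntClosure R)}) (pseq n)) :
    IsLocalRing E ∧
    (∀ e : E, pE * e = 0 → e = 0) ∧
    Function.Surjective (φ 0) ∧
    RingHom.ker (φ 0) = Ideal.span {pE} ∧
    IsAdicComplete (Ideal.span {pE}) E := by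
  classical
  haveI : Fact p.Prime := ⟨hp⟩
  have hpmem : (p : R) ∈ maximalIdeal R := by
    rw [hxgen]
    exact Ideal.subset_span ⟨⟨0, hd⟩, hx0⟩
  have hpnotunit : ¬ IsUnit (p : AbsIntClosure R) := FRaux.aic_not_unit R hpmem
  have hPne : Ideal.span {(p : AbsIntClosure R)} ≠ ⊤ := fun h =>
    hpnotunit (Ideal.span_singleton_eq_top.mp h)
  haveI : Nontrivial (AbsIntClosure R ⧸ Ideal.span {(p : AbsIntClosure R)}) :=
    Ideal.Quotient.nontrivial_iff.mpr hPne
  have hpA : ((p : ℕ) : AbsIntClosure R ⧸ Ideal.span {(p : AbsIntClosure R)}) = 0 := by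
    rw [← map_natCast (Ideal.Quotient.mk (Ideal.span {(p : AbsIntClosure R)}))]
    exact Ideal.Quotient.eq_zero_iff_mem.mpr (Ideal.subset_span rfl)
  haveI : CharP (AbsIntClosure R ⧸ Ideal.span {(p : AbsIntClosure R)}) p :=
    (CharP.charP_iff_prime_eq_zero hp).mpr hpA
  haveI hRploc : IsLocalRing (AbsIntClosure R) :=
    FRaux.aic_isLocalRing R hcompl.toIsPrecomplete
  have hAloc : IsLocalRing (AbsIntClosure R ⧸ Ideal.span {(p : AbsIntClosure R)}) :=
    IsLocalRing.of_surjective' (Ideal.Quotient.mk _) Ideal.Quotient.mk_surjective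
  have hpne0 : (p : AbsIntClosure R) ≠ 0 := FRaux.aic_natCast_ne_zero R hp.ne_zero
  -- powers of the compatible system
  have hpseqpow' : ∀ k j, pseq (k + j) ^ (p ^ j) = pseq k := by
    intro k j
    induction j with
    | zero => simp
    | succ i ih =>
      have h1 : pseq (k + (i + 1)) ^ (p ^ (i + 1)) = (pseq (k + i + 1) ^ p) ^ (p ^ i) := by
        rw [← pow_mul]
        congr 1
        rw [pow_succ]
        ring
      rw [h1, hpseqpow (k + i), ih]
  have hpseqtop : ∀ k, pseq k ^ (p ^ k) = (p : AbsIntClosure R) := by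
    intro k
    have := hpseqpow' 0 k
    rwa [Nat.zero_add, hpseq0] at this
  have hpseqne : ∀ k, pseq k ≠ 0 := by
    intro k h
    apply hpne0
    rw [← hpseqtop k, h, zero_pow (Nat.pow_pos hp.pos (n := k)).ne']
  -- the crucial root-extraction property of the absolute integral closure
  have hAIC : ∀ (k : ℕ) (u v : AbsIntClosure R), u ^ (p ^ k) = (p : AbsIntClosure R) * v →
      ∃ w : AbsIntClosure R, u = pseq k * w := by
    intro k u v hv
    have hpsne : FRaux.aicVal R (pseq k) ≠ 0 := fun h =>
      hpseqne k (FRaux.aicVal_inj R (by rw [h, map_zero]))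
    have hKp : ((p : ℕ) : AlgebraicClosure (FractionRing R)) ≠ 0 :=
      Nat.cast_ne_zero.mpr hp.ne_zero
    have hzpow : (FRaux.aicVal R u / FRaux.aicVal R (pseq k)) ^ (p ^ k)
        = FRaux.aicVal R v := by
      rw [div_pow, ← map_pow, ← map_pow, hv, hpseqtop, map_mul, map_natCast,
        mul_div_cancel_left₀ _ hKp]
    have hzint : IsIntegral R (FRaux.aicVal R u / FRaux.aicVal R (pseq k)) := by
      refine IsIntegral.of_pow (Nat.pow_pos hp.pos (n := k)) ?_
      rw [hzpow]
      exact FRaux.aicVal_int R v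
    obtain ⟨w, hw⟩ := FRaux.aic_exists_of_int R _ hzint
    refine ⟨w, FRaux.aicVal_inj R ?_⟩
    rw [map_mul, hw, mul_comm, div_mul_cancel₀ _ hpsne]
  have hπker : ∀ a : AbsIntClosure R,
      Ideal.Quotient.mk (Ideal.span {(p : AbsIntClosure R)}) a = 0 ↔
        (p : AbsIntClosure R) ∣ a := by
    intro a
    rw [Ideal.Quotient.eq_zero_iff_mem, Ideal.mem_span_singleton]
  exact FRaux.main p hp (AbsIntClosure R)
    (AbsIntClosure R ⧸ Ideal.span {(p : AbsIntClosure R)}) hAloc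
    (Ideal.Quotient.mk _) Ideal.Quotient.mk_surjective
    pseq hpseq0 hpseqpow hpne0 hπker hAIC
    (fun u => FRaux.aic_exists_pow_eq R u hp.pos)
    E φ hφ hφlim pE hpE
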